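/- If M is a subset of Euclidean n-space contained in the bounding voxel V₀, then the limit of the subdivision approximations equals the closure of M exactly: ⋂_{t ∈ ℕ} C_t(M) = closure(M). -/

import Mathlib

open Set Metric Filter MeasureTheory ENNReal

noncomputable section

variable {n : ℕ}

/-- The bounding voxel `V₀ = {x | ∀ i, a i ≤ x i ∧ x i < b i}`. -/
def boundingVoxel (a b : EuclideanSpace ℝ (Fin n)) : Set (EuclideanSpace ℝ (Fin n)) :=
  {x | ∀ i, a i ≤ x i ∧ x i < b i}

/-- The level-`t` dyadic sub-voxel `D_t(k)`. -/
def subVoxel (a b : EuclideanSpace ℝ (Fin n)) (t : ℕ) (k : Fin n → ℕ) :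
    Set (EuclideanSpace ℝ (Fin n)) :=
  {x | ∀ i, a i + (k i : ℝ) * (b i - a i) / 2 ^ t ≤ x i ∧
            x i < a i + ((k i : ℝ) + 1) * (b i - a i) / 2 ^ t}

/-- The retained indices `Q_t(M)`: admissible `k` whose closed sub-voxel meets `M`. -/
def retained (a b : EuclideanSpace ℝ (Fin n)) (t : ℕ) (M : Set (EuclideanSpace ℝ (Fin n))) :
    Set (Fin n → ℕ) :=
  {k | (∀ i, k i < 2 ^ t) ∧ (closure (subVoxel a b t k) ∩ M).Nonempty}

/-- The level-`t` approximation `C_t(M)`: union of the closures of retained sub-voxels. -/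
def approx (a b : EuclideanSpace ℝ (Fin n)) (t : ℕ) (M : Set (EuclideanSpace ℝ (Fin n))) :
    Set (EuclideanSpace ℝ (Fin n)) :=
  ⋃ k ∈ retained a b t M, closure (subVoxel a b t k)

lemma exists_mem_subVoxel (a b : EuclideanSpace ℝ (Fin n)) (hab : ∀ i, a i < b i)
    (t : ℕ) (x : EuclideanSpace ℝ (Fin n)) (hx : ∀ i, a i ≤ x i ∧ x i < b i) :
    ∃ k : Fin n → ℕ, (∀ i, k i < 2 ^ t) ∧ x ∈ subVoxel a b t k := by
  have hc : ∀ i, (0:ℝ) < (b i - a i) / 2 ^ t := fun i =>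
    div_pos (by linarith [hab i]) (by positivity)
  refine ⟨fun i => ⌊(x i - a i) / ((b i - a i) / 2 ^ t)⌋₊, fun i => ?_, fun i => ?_⟩
  · have hnn : 0 ≤ (x i - a i) / ((b i - a i) / 2 ^ t) :=
      div_nonneg (by linarith [(hx i).1]) (hc i).le
    rw [Nat.floor_lt hnn, div_lt_iff₀ (hc i)]
    push_cast
    rw [mul_div_assoc']
    rw [mul_div_cancel_left₀ _ (by positivity : (2:ℝ)^t ≠ 0)]
    linarith [(hx i).2]
  · have hnn : 0 ≤ (x i - a i) / ((b i - a i) / 2 ^ t) :=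
      div_nonneg (by linarith [(hx i).1]) (hc i).le
    have h1 : (⌊(x i - a i) / ((b i - a i) / 2 ^ t)⌋₊ : ℝ) ≤
        (x i - a i) / ((b i - a i) / 2 ^ t) := Nat.floor_le hnn
    have h2 : (x i - a i) / ((b i - a i) / 2 ^ t) <
        ⌊(x i - a i) / ((b i - a i) / 2 ^ t)⌋₊ + 1 := Nat.lt_floor_add_one _
    have e1 := mul_le_mul_of_nonneg_right h1 (hc i).le
    have e2 := mul_lt_mul_of_pos_right h2 (hc i)
    rw [div_mul_cancel₀ _ (hc i).ne'] at e1 e2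
    constructor
    · simp only [mul_div_assoc]
      linarith
    · simp only [mul_div_assoc]
      linarith

lemma closure_subVoxel_subset (a b : EuclideanSpace ℝ (Fin n)) (t : ℕ) (k : Fin n → ℕ) :
    closure (subVoxel a b t k) ⊆
      {x | ∀ i, a i + (k i : ℝ) * (b i - a i) / 2 ^ t ≤ x i ∧
               x i ≤ a i + ((k i : ℝ) + 1) * (b i - a i) / 2 ^ t} := by
  apply closure_minimal
  · intro x hx i
    exact ⟨(hx i).1, (hx i).2.le⟩
  · have : {x : EuclideanSpace ℝ (Fin n) | ∀ i, a i + (k i : ℝ) * (b i - a i) / 2 ^ t ≤ x i ∧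
               x i ≤ a i + ((k i : ℝ) + 1) * (b i - a i) / 2 ^ t} =
        ⋂ i, ({x : EuclideanSpace ℝ (Fin n) | a i + (k i : ℝ) * (b i - a i) / 2 ^ t ≤ x i} ∩
              {x | x i ≤ a i + ((k i : ℝ) + 1) * (b i - a i) / 2 ^ t}) := by
      ext x; simp [Set.mem_iInter, forall_and]
    rw [this]
    refine isClosed_iInter fun i => IsClosed.inter ?_ ?_
    · exact isClosed_le continuous_const (EuclideanSpace.proj i).continuous
    · exact isClosed_le (EuclideanSpace.proj i).continuous continuous_const

lemma dist_le_of_mem_closure_subVoxel (a b : EuclideanSpace ℝ (Fin n))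
    (t : ℕ) (k : Fin n → ℕ) (x y : EuclideanSpace ℝ (Fin n))
    (hx : x ∈ closure (subVoxel a b t k)) (hy : y ∈ closure (subVoxel a b t k)) :
    dist x y ≤ Real.sqrt (∑ i, (b i - a i) ^ 2) / 2 ^ t := by
  have hx' := closure_subVoxel_subset a b t k hx
  have hy' := closure_subVoxel_subset a b t k hy
  have hcoord : ∀ i, dist (x i) (y i) ≤ (b i - a i) / 2 ^ t := by
    intro i
    have h1 := (hx' i).1; have h2 := (hx' i).2
    have h3 := (hy' i).1; have h4 := (hy' i).2
    have key : (↑(k i) + 1) * (b i - a i) / 2 ^ t - ↑(k i) * (b i - a i) / 2 ^ t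
        = (b i - a i) / 2 ^ t := by ring
    rw [Real.dist_eq, abs_sub_le_iff]
    constructor <;> linarith
  rw [EuclideanSpace.dist_eq]
  have hsum : ∑ i, dist (x i) (y i) ^ 2 ≤ (∑ i, (b i - a i) ^ 2) / (2 ^ t) ^ 2 := by
    rw [Finset.sum_div]
    refine Finset.sum_le_sum fun i _ => ?_
    rw [← div_pow]
    exact pow_le_pow_left₀ dist_nonneg (hcoord i) 2
  calc Real.sqrt (∑ i, dist (x i) (y i) ^ 2) ≤
      Real.sqrt ((∑ i, (b i - a i) ^ 2) / (2 ^ t) ^ 2) := Real.sqrt_le_sqrt hsum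
    _ = Real.sqrt (∑ i, (b i - a i) ^ 2) / 2 ^ t := by
        rw [Real.sqrt_div (by positivity), Real.sqrt_sq (by positivity)]

lemma retained_finite (a b : EuclideanSpace ℝ (Fin n)) (t : ℕ)
    (M : Set (EuclideanSpace ℝ (Fin n))) : (retained a b t M).Finite := by
  refine Set.Finite.subset (Set.Finite.pi fun i => Set.finite_Iio (2 ^ t)) ?_
  intro k hk
  exact fun i _ => hk.1 i

/-- if `M ⊆ V₀`, then the limit of the approximations equals `closure M`. -/
theorem iInter_approx_eq_closure
    (n : ℕ) (hn : 1 ≤ n) (a b : EuclideanSpace ℝ (Fin n)) (hab : ∀ i, a i < b i)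
    (M : Set (EuclideanSpace ℝ (Fin n))) (hM : M ⊆ boundingVoxel a b) :
    (⋂ t : ℕ, approx a b t M) = closure M := by
  apply Subset.antisymm
  · intro x hx
    rw [Metric.mem_closure_iff]
    intro ε hε
    obtain ⟨t, ht⟩ := pow_unbounded_of_one_lt (Real.sqrt (∑ i, (b i - a i) ^ 2) / ε)
      (by norm_num : (1:ℝ) < 2)
    have hxt : x ∈ approx a b t M := Set.mem_iInter.mp hx t
    obtain ⟨k, hk, hxk⟩ := Set.mem_iUnion₂.mp hxt
    obtain ⟨y, hyc, hyM⟩ := hk.2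
    refine ⟨y, hyM, ?_⟩
    have hd := dist_le_of_mem_closure_subVoxel a b t k x y hxk hyc
    have h2t : (0:ℝ) < 2 ^ t := by positivity
    have : Real.sqrt (∑ i, (b i - a i) ^ 2) / 2 ^ t < ε := by
      rw [div_lt_iff₀ h2t]
      rw [div_lt_iff₀ hε] at ht
      linarith
    linarith
  · refine Set.subset_iInter fun t => closure_minimal ?_ ?_
    · intro x hx
      obtain ⟨k, hk1, hk2⟩ := exists_mem_subVoxel a b hab t x (hM hx)
      exact Set.mem_biUnion ⟨hk1, ⟨x, subset_closure hk2, hx⟩⟩ (subset_closure hk2)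
    · exact (retained_finite a b t M).isClosed_biUnion fun k _ => isClosed_closure
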